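/- (α-JC₂) Let K be a field of characteristic zero and let α be the exchange involution of K[X,Y] (α(X) = Y, α(Y) = X). If f: K[X,Y] → K[X,Y] is a K-algebra endomorphism commuting with α and satisfying Jac(f(X), f(Y)) = 1, then f is an automorphism of K[X,Y]. -/

import Mathlib

open scoped BigOperators

open MvPolynomial

variable (K : Type*) [Field K]

/-- The Jacobian of a pair of polynomials in two variables. -/
noncomputable def Jac (P Q : MvPolynomial (Fin 2) K) : MvPolynomial (Fin 2) K :=
  pderiv 0 P * pderiv 1 Q - pderiv 1 P * pderiv 0 Q

/-- The exchange involution `α` of `K[X,Y]` with `α(X) = Y`, `α(Y) = X`. -/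
noncomputable def polyAlpha : MvPolynomial (Fin 2) K →ₐ[K] MvPolynomial (Fin 2) K :=
  aeval ![X 1, X 0]


namespace Stmt16Aux

variable {K : Type*} [Field K]

local notation "T" => MvPolynomial (Fin 2) K




noncomputable abbrev mk (i j : ℕ) : Fin 2 →₀ ℕ := Finsupp.single 0 i + Finsupp.single 1 j

lemma mk_apply0 (i j : ℕ) : mk i j 0 = i := by simp [mk]
lemma mk_apply1 (i j : ℕ) : mk i j 1 = j := by simp [mk, Finsupp.single_apply]

lemma eq_mk' (m : Fin 2 →₀ ℕ) : mk (m 0) (m 1) = m := by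
  ext a
  fin_cases a
  · simp [mk]
  · simp [mk, Finsupp.single_apply]

lemma mk_inj {i j i' j' : ℕ} (h : mk i j = mk i' j') : i = i' ∧ j = j' := by
  constructor
  · have := congrArg (fun m => m 0) h; simpa [mk_apply0] using this
  · have := congrArg (fun m => m 1) h; simpa [mk_apply1] using this

lemma mk_eq_iff (i j : ℕ) (m : Fin 2 →₀ ℕ) : mk i j = m ↔ (m 0 = i ∧ m 1 = j) := by
  constructor
  · intro h; rw [← h]; simp [mk_apply0, mk_apply1]
  · rintro ⟨h0, h1⟩; rw [← h0, ← h1, eq_mk']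

lemma monomial_eq_prod (n : Fin 2 →₀ ℕ) (a : K) :
    (monomial n a : T) = C a * X 0 ^ (n 0) * X 1 ^ (n 1) := by
  rw [monomial_eq, Finsupp.prod_fintype _ _ (fun i => pow_zero _), Fin.prod_univ_two, mul_assoc]

lemma coeff_nu (p : T) (m : Fin 2 →₀ ℕ) :
    coeff m (aeval ![X 0, -X 1] p) = (-1:K)^(m 1) * coeff m p := by
  induction p using MvPolynomial.induction_on' with
  | add p q hp hq => simp only [map_add, coeff_add, hp, hq]; ring
  | monomial n a =>
    have key : (aeval ![X 0, -X 1] (monomial n a) : T) = monomial n ((-1:K)^(n 1) * a) := by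
      rw [monomial_eq_prod, monomial_eq_prod]
      simp only [map_mul, map_pow, aeval_X, Matrix.cons_val_zero, Matrix.cons_val_one,
        Matrix.head_cons, aeval_C, MvPolynomial.algebraMap_eq]
      rw [neg_pow, show ((-1:T)) = C (-1:K) by simp, ← map_pow]
      ring
    rw [key, coeff_monomial, coeff_monomial]
    by_cases h : n = m
    · subst h; simp
    · simp [h]

noncomputable def ph0 : T →ₐ[K] Polynomial K := aeval ![Polynomial.X, 0]
noncomputable def ph1 : T →ₐ[K] Polynomial K := aeval ![0, Polynomial.X]

lemma coeff_ph0 (p : T) (i : ℕ) : (ph0 p).coeff i = coeff (mk i 0) p := by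
  induction p using MvPolynomial.induction_on' with
  | add p q hp hq => simp [map_add, hp, hq]
  | monomial n a =>
    rw [coeff_monomial, monomial_eq_prod]
    simp only [ph0, map_mul, map_pow, aeval_X, Matrix.cons_val_zero, Matrix.cons_val_one,
      Matrix.head_cons, aeval_C, Polynomial.algebraMap_eq]
    rcases Nat.eq_zero_or_pos (n 1) with h1 | h1
    · rw [h1, pow_zero, mul_one, Polynomial.coeff_C_mul, Polynomial.coeff_X_pow]
      by_cases h : n = mk i 0
      · rw [if_pos h, if_pos]
        · ring
        · rw [h, mk_apply0]
      · rw [if_neg h, if_neg, mul_zero]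
        intro hni
        exact h (by rw [← eq_mk' n, h1, ← hni])
    · rw [zero_pow (by omega), mul_zero, Polynomial.coeff_zero,
        if_neg (fun h => by rw [h, mk_apply1] at h1; omega)]

lemma coeff_ph1 (p : T) (j : ℕ) : (ph1 p).coeff j = coeff (mk 0 j) p := by
  induction p using MvPolynomial.induction_on' with
  | add p q hp hq => simp [map_add, hp, hq]
  | monomial n a =>
    rw [coeff_monomial, monomial_eq_prod]
    simp only [ph1, map_mul, map_pow, aeval_X, Matrix.cons_val_zero, Matrix.cons_val_one,
      Matrix.head_cons, aeval_C, Polynomial.algebraMap_eq]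
    rcases Nat.eq_zero_or_pos (n 0) with h1 | h1
    · rw [h1, pow_zero, mul_one, Polynomial.coeff_C_mul, Polynomial.coeff_X_pow]
      by_cases h : n = mk 0 j
      · rw [if_pos h, if_pos]
        · ring
        · rw [h, mk_apply1]
      · rw [if_neg h, if_neg, mul_zero]
        intro hnj
        exact h (by rw [← eq_mk' n, h1, ← hnj])
    · rw [zero_pow (by omega), mul_zero, zero_mul, Polynomial.coeff_zero,
        if_neg (fun h => by rw [h, mk_apply0] at h1; omega)]

lemma coeff_polyaeval (q : Polynomial K) (m : Fin 2 →₀ ℕ) :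
    coeff m (Polynomial.aeval (X 1 : T) q) = if m 0 = 0 then q.coeff (m 1) else 0 := by
  induction q using Polynomial.induction_on' with
  | add p q hp hq =>
    simp only [map_add, coeff_add, hp, hq, Polynomial.coeff_add]
    by_cases h : m 0 = 0 <;> simp [h]
  | monomial n a =>
    rw [Polynomial.aeval_monomial, MvPolynomial.algebraMap_eq]
    have : (C a : T) * X 1 ^ n = monomial (mk 0 n) a := by
      rw [monomial_eq_prod, mk_apply0, mk_apply1, pow_zero, mul_one]
    rw [this, coeff_monomial, Polynomial.coeff_monomial]
    by_cases h : mk 0 n = m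
    · rw [if_pos h]
      rcases (mk_eq_iff 0 n m).mp h with ⟨h0, h1⟩
      rw [if_pos h0, if_pos h1.symm]
    · rw [if_neg h]
      by_cases h0 : m 0 = 0
      · rw [if_pos h0, if_neg]
        intro hn
        exact h ((mk_eq_iff 0 n m).mpr ⟨h0, hn.symm⟩)
      · rw [if_neg h0]


lemma coeff_pderiv (p : MvPolynomial (Fin 2) K) (i : Fin 2) (m : Fin 2 →₀ ℕ) :
    coeff m (pderiv i p) = (m i + 1 : ℕ) * coeff (m + Finsupp.single i 1) p := by
  induction p using MvPolynomial.induction_on' with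
  | add p q hp hq => simp [hp, hq, mul_add]
  | monomial n a =>
    rw [pderiv_monomial]
    rcases Nat.eq_zero_or_pos (n i) with h0 | h0
    · have hne : ¬ n = m + Finsupp.single i 1 := by
        intro h; rw [h] at h0; simp at h0
      rw [h0]
      simp [coeff_monomial, hne]
    · have hiff : (n - Finsupp.single i 1 = m) ↔ (n = m + Finsupp.single i 1) := by
        constructor
        · intro h
          ext x
          have hq := congrArg (fun q => q x) h
          simp only [Finsupp.tsub_apply, Finsupp.add_apply, Finsupp.single_apply] at hq ⊢
          by_cases hai : i = x
          · subst hai; simp at hq ⊢; omega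
          · simp only [if_neg hai] at hq ⊢; omega
        · intro h
          ext x
          have hq := congrArg (fun q => q x) h
          simp only [Finsupp.tsub_apply, Finsupp.add_apply, Finsupp.single_apply] at hq ⊢
          by_cases hai : i = x
          · subst hai; simp at hq ⊢; omega
          · simp only [if_neg hai] at hq ⊢; omega
      rw [coeff_monomial, coeff_monomial]
      by_cases h : n = m + Finsupp.single i 1
      · rw [if_pos (hiff.mpr h), if_pos h]
        have : n i = m i + 1 := by rw [h]; simp
        rw [this]; push_cast; ring
      · rw [if_neg (fun hh => h (hiff.mp hh)), if_neg h, mul_zero]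



lemma pderiv_aeval (g : Fin 2 → MvPolynomial (Fin 2) K) (p : MvPolynomial (Fin 2) K) (i : Fin 2) :
    pderiv i (aeval g p) =
      aeval g (pderiv 0 p) * pderiv i (g 0) + aeval g (pderiv 1 p) * pderiv i (g 1) := by
  induction p using MvPolynomial.induction_on with
  | C a => simp
  | add p q hp hq => simp only [map_add]; rw [hp, hq]; ring
  | mul_X p n hp =>
    fin_cases n <;>
    · rw [map_mul, aeval_X, pderiv_mul, hp, pderiv_mul, pderiv_mul]
      simp only [pderiv_X, Pi.single_apply]
      norm_num
      ring

lemma jac_aeval (g : Fin 2 → MvPolynomial (Fin 2) K) (p q : MvPolynomial (Fin 2) K) :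
    Jac K (aeval g p) (aeval g q) = aeval g (Jac K p q) * Jac K (g 0) (g 1) := by
  simp only [Jac, pderiv_aeval, map_sub, map_mul]
  ring







noncomputable def th : T →ₐ[K] T := aeval ![X 0 + X 1, X 0 - X 1]
noncomputable def thInv : T →ₐ[K] T :=
  aeval ![C (2⁻¹ : K) * (X 0 + X 1), C (2⁻¹ : K) * (X 0 - X 1)]

variable [CharZero K]

lemma hC2 : (C (2⁻¹ : K) : T) * 2 = 1 := by
  have h : ((2 : ℕ) : T) = C ((2:ℕ) : K) := by rw [MvPolynomial.C_eq_coe_nat]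
  push_cast at h
  rw [h, ← map_mul]
  norm_num

lemma th_thInv (p : T) : th (thInv p) = p := by
  have h : (th.comp thInv : T →ₐ[K] T) = AlgHom.id K T := by
    apply MvPolynomial.algHom_ext
    intro i
    have h2 := hC2 (K := K)
    fin_cases i <;>
    · simp only [Fin.zero_eta, Fin.mk_one, AlgHom.comp_apply, th, thInv, aeval_X,
        AlgHom.id_apply, Matrix.cons_val_zero, Matrix.cons_val_one, Matrix.head_cons,
        map_mul, map_add, map_sub, aeval_C, MvPolynomial.algebraMap_eq]
      first
      | linear_combination (X 0 : T) * h2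
      | linear_combination (X 1 : T) * h2
  exact congrArg (fun g => g p) (congrArg DFunLike.coe h)

lemma thInv_th (p : T) : thInv (th p) = p := by
  have h : (thInv.comp th : T →ₐ[K] T) = AlgHom.id K T := by
    apply MvPolynomial.algHom_ext
    intro i
    have h2 := hC2 (K := K)
    fin_cases i <;>
    · simp only [Fin.zero_eta, Fin.mk_one, AlgHom.comp_apply, th, thInv, aeval_X,
        AlgHom.id_apply, Matrix.cons_val_zero, Matrix.cons_val_one, Matrix.head_cons,
        map_mul, map_add, map_sub, aeval_C, MvPolynomial.algebraMap_eq]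
      first
      | linear_combination (X 0 : T) * h2
      | linear_combination (X 1 : T) * h2
  exact congrArg (fun g => g p) (congrArg DFunLike.coe h)


-- STAGE2
lemma mk_add_mk (i j k l : ℕ) : mk i j + mk k l = mk (i+k) (j+l) := by
  ext a
  fin_cases a <;> simp [mk, Finsupp.single_apply] <;> ring

lemma single0_eq_mk : (Finsupp.single (0 : Fin 2) 1) = mk 1 0 := by simp [mk]
lemma single1_eq_mk : (Finsupp.single (1 : Fin 2) 1) = mk 0 1 := by simp [mk]

set_option maxHeartbeats 2000000 in
lemma stage2 [CharZero K] (s r : T)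
    (hJ1 : pderiv 0 s * pderiv 1 r - pderiv 1 s * pderiv 0 r = 1)
    (F1a : ∀ i, 2 ≤ i → coeff (mk i 0) s = 0)
    (F1b : coeff (mk 1 0) s ≠ 0)
    (F2a : ∀ k, 1 ≤ k → coeff (mk k 1) r = 0)
    (F2b : coeff (mk 0 1) r ≠ 0)
    (F2c : ∀ m : Fin 2 →₀ ℕ, Even (m 1) → coeff m r = 0) :
    (∀ m ∈ s.support, m 0 ≤ 1) ∧ (∀ m ∈ r.support, m 0 = 0) := by
  classical
  have hs0 : ∀ m ∈ s.support, 2 ≤ m 0 → 1 ≤ m 1 := by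
    intro m hm h2
    by_contra h
    push_neg at h
    have h0 : m 1 = 0 := by omega
    have hz := F1a (m 0) h2
    have hmm : mk (m 0) 0 = m := by
      conv_rhs => rw [← eq_mk' m]
      rw [h0]
    rw [hmm] at hz
    exact (mem_support_iff.mp hm) hz
  have hr1 : ∀ m ∈ r.support, 1 ≤ m 1 := by
    intro m hm
    by_contra h
    push_neg at h
    have h0 : m 1 = 0 := by omega
    exact (mem_support_iff.mp hm) (F2c m (by rw [h0]; exact Even.zero))
  have hr2 : ∀ m ∈ r.support, 1 ≤ m 0 → 2 ≤ m 1 := by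
    intro m hm h1
    by_contra h
    push_neg at h
    have h0 : m 1 = 1 := by have := hr1 m hm; omega
    have hz := F2a (m 0) h1
    have hmm : mk (m 0) 1 = m := by
      conv_rhs => rw [← eq_mk' m]
      rw [h0]
    rw [hmm] at hz
    exact (mem_support_iff.mp hm) hz
  by_contra hcon
  rw [not_and_or] at hcon
  set Rs : Finset ℚ :=
    (s.support.filter (fun m => 2 ≤ m 0)).image (fun m => ((m 0 : ℚ) - 1)/(m 1)) with hRs
  set Rr : Finset ℚ :=
    (r.support.filter (fun m => 1 ≤ m 0)).image (fun m => (m 0 : ℚ)/((m 1 : ℚ) - 1)) with hRr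
  have hne : (Rs ∪ Rr).Nonempty := by
    rcases hcon with h | h
    · push_neg at h
      obtain ⟨m, hm, hm2⟩ := h
      exact ⟨_, Finset.mem_union_left _ (Finset.mem_image_of_mem _
        (Finset.mem_filter.mpr ⟨hm, by omega⟩))⟩
    · push_neg at h
      obtain ⟨m, hm, hm0⟩ := h
      exact ⟨_, Finset.mem_union_right _ (Finset.mem_image_of_mem _
        (Finset.mem_filter.mpr ⟨hm, by omega⟩))⟩
  set τ := (Rs ∪ Rr).max' hne with hτdef
  have hτmem : τ ∈ Rs ∪ Rr := by rw [hτdef]; exact Finset.max'_mem _ _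
  have hτle : ∀ x ∈ Rs ∪ Rr, x ≤ τ := fun x hx => Finset.le_max' _ x hx
  have hτ0 : 0 ≤ τ := by
    rcases Finset.mem_union.mp hτmem with h | h
    · obtain ⟨m, hm, hval⟩ := Finset.mem_image.mp h
      obtain ⟨hms', h2⟩ := Finset.mem_filter.mp hm
      have hj := hs0 m hms' h2
      rw [← hval]
      have c1 : (2:ℚ) ≤ m 0 := by exact_mod_cast h2
      have c2 : (1:ℚ) ≤ m 1 := by exact_mod_cast hj
      apply div_nonneg <;> linarith
    · obtain ⟨m, hm, hval⟩ := Finset.mem_image.mp h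
      obtain ⟨hmr', h1⟩ := Finset.mem_filter.mp hm
      have hl := hr2 m hmr' h1
      rw [← hval]
      have c1 : (1:ℚ) ≤ m 0 := by exact_mod_cast h1
      have c2 : (2:ℚ) ≤ m 1 := by exact_mod_cast hl
      apply div_nonneg <;> linarith
  have BS : ∀ m ∈ s.support, (m 0 : ℚ) - τ * m 1 ≤ 1 := by
    intro m hm
    by_cases h2 : 2 ≤ m 0
    · have hj := hs0 m hm h2
      have hx : ((m 0 : ℚ) - 1)/(m 1) ≤ τ := hτle _ (Finset.mem_union_left _
        (Finset.mem_image_of_mem _ (Finset.mem_filter.mpr ⟨hm, h2⟩)))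
      have hjq : (0:ℚ) < m 1 := by exact_mod_cast hj
      rw [div_le_iff₀ hjq] at hx
      linarith
    · push_neg at h2
      have c1 : (m 0 : ℚ) ≤ 1 := by exact_mod_cast (by omega : m 0 ≤ 1)
      have c2 : (0:ℚ) ≤ τ * m 1 := mul_nonneg hτ0 (by positivity)
      linarith
  have BR : ∀ m ∈ r.support, (m 0 : ℚ) ≤ τ * ((m 1 : ℚ) - 1) := by
    intro m hm
    by_cases h1 : 1 ≤ m 0
    · have hl := hr2 m hm h1
      have hx : (m 0 : ℚ)/((m 1 : ℚ) - 1) ≤ τ := hτle _ (Finset.mem_union_right _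
        (Finset.mem_image_of_mem _ (Finset.mem_filter.mpr ⟨hm, h1⟩)))
      have hd : (0:ℚ) < (m 1 : ℚ) - 1 := by
        have : (2:ℚ) ≤ m 1 := by exact_mod_cast hl
        linarith
      rw [div_le_iff₀ hd] at hx
      linarith
    · have h0 : m 0 = 0 := by omega
      have hl := hr1 m hm
      have hd : (0:ℚ) ≤ (m 1 : ℚ) - 1 := by
        have : (1:ℚ) ≤ m 1 := by exact_mod_cast hl
        linarith
      rw [h0]
      push_cast
      exact mul_nonneg hτ0 hd
  -- the distinguished maximizers
  have h10 : mk 1 0 ∈ s.support := mem_support_iff.mpr F1b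
  set Fs := s.support.filter (fun m => (m 0 : ℚ) - τ * m 1 = 1) with hFsdef
  have h10Fs : mk 1 0 ∈ Fs := Finset.mem_filter.mpr ⟨h10, by
    rw [mk_apply0, mk_apply1]; push_cast; ring⟩
  have hFsne : (Fs.image fun m => m 1).Nonempty :=
    ⟨0, Finset.mem_image.mpr ⟨mk 1 0, h10Fs, mk_apply1 1 0⟩⟩
  set j1 := (Fs.image fun m => m 1).max' hFsne with hj1def
  obtain ⟨ms, hmsFs, hmsj⟩ := Finset.mem_image.mp ((Fs.image fun m => m 1).max'_mem hFsne)
  rw [← hj1def] at hmsj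
  set i1 := ms 0 with hi1def
  have hmsS : ms ∈ s.support := (Finset.mem_filter.mp hmsFs).1
  have hmsv : (i1 : ℚ) = 1 + τ * j1 := by
    have hv := (Finset.mem_filter.mp hmsFs).2
    rw [hmsj] at hv
    linarith
  have hjmax : ∀ m ∈ Fs, m 1 ≤ j1 := fun m hm =>
    Finset.le_max' (Fs.image fun m => m 1) (m 1) (Finset.mem_image_of_mem _ hm)
  have hmsmk : mk i1 j1 = ms := by rw [hi1def, ← hmsj, eq_mk']
  have hmsu : ∀ m ∈ Fs, m 1 = j1 → m = ms := by
    intro m hm hmj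
    have hv := (Finset.mem_filter.mp hm).2
    rw [hmj] at hv
    have hq : (m 0 : ℚ) = (i1 : ℚ) := by rw [hmsv]; linarith
    have h00 : m 0 = i1 := by exact_mod_cast hq
    rw [← eq_mk' m, h00, hmj]
    exact hmsmk
  have h01 : mk 0 1 ∈ r.support := mem_support_iff.mpr F2b
  set Fr := r.support.filter (fun m => (m 0 : ℚ) - τ * m 1 = -τ) with hFrdef
  have h01Fr : mk 0 1 ∈ Fr := Finset.mem_filter.mpr ⟨h01, by
    rw [mk_apply0, mk_apply1]; push_cast; ring⟩
  have hFrne : (Fr.image fun m => m 1).Nonempty :=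
    ⟨1, Finset.mem_image.mpr ⟨mk 0 1, h01Fr, mk_apply1 0 1⟩⟩
  set l1 := (Fr.image fun m => m 1).max' hFrne with hl1def
  obtain ⟨mr, hmrFr, hmrl⟩ := Finset.mem_image.mp ((Fr.image fun m => m 1).max'_mem hFrne)
  rw [← hl1def] at hmrl
  set k1 := mr 0 with hk1def
  have hmrR : mr ∈ r.support := (Finset.mem_filter.mp hmrFr).1
  have hmrv : (k1 : ℚ) = τ * ((l1 : ℚ) - 1) := by
    have hv := (Finset.mem_filter.mp hmrFr).2
    rw [hmrl] at hv
    have : (k1:ℚ) - τ * l1 = -τ := hv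
    linarith [this]
  have hlmax : ∀ m ∈ Fr, m 1 ≤ l1 := fun m hm =>
    Finset.le_max' (Fr.image fun m => m 1) (m 1) (Finset.mem_image_of_mem _ hm)
  have hmrmk : mk k1 l1 = mr := by rw [hk1def, ← hmrl, eq_mk']
  have hmru : ∀ m ∈ Fr, m 1 = l1 → m = mr := by
    intro m hm hml
    have hv := (Finset.mem_filter.mp hm).2
    rw [hml] at hv
    have hq : (m 0 : ℚ) = (k1 : ℚ) := by rw [hmrv]; linarith
    have h00 : m 0 = k1 := by exact_mod_cast hq
    rw [← eq_mk' m, h00, hml]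
    exact hmrmk
  have hl11 : 1 ≤ l1 := by
    have := hr1 mr hmrR
    omega
  have hi11 : 1 ≤ i1 := by
    by_contra h
    push_neg at h
    have h0 : i1 = 0 := by omega
    rw [h0] at hmsv
    have : (0:ℚ) ≤ τ * j1 := mul_nonneg hτ0 (by positivity)
    norm_num at hmsv
    linarith
  have hExc : 1 ≤ j1 ∨ 2 ≤ l1 := by
    rcases Finset.mem_union.mp hτmem with h | h
    · left
      obtain ⟨m, hm, hval⟩ := Finset.mem_image.mp h
      obtain ⟨hmS, h2⟩ := Finset.mem_filter.mp hm
      have hj := hs0 m hmS h2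
      have hjq : ((m 1:ℕ):ℚ) ≠ 0 := by
        have : (1:ℚ) ≤ m 1 := by exact_mod_cast hj
        linarith
      have hmFs : m ∈ Fs := Finset.mem_filter.mpr ⟨hmS, by
        rw [← hval]
        field_simp
        ring⟩
      calc 1 ≤ m 1 := hj
        _ ≤ j1 := hjmax m hmFs
    · right
      obtain ⟨m, hm, hval⟩ := Finset.mem_image.mp h
      obtain ⟨hmR, h1⟩ := Finset.mem_filter.mp hm
      have hl := hr2 m hmR h1
      have hdq : ((m 1:ℕ):ℚ) - 1 ≠ 0 := by
        have : (2:ℚ) ≤ m 1 := by exact_mod_cast hl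
        linarith
      have hmFr : m ∈ Fr := Finset.mem_filter.mpr ⟨hmR, by
        rw [← hval]
        field_simp
        ring⟩
      calc 2 ≤ m 1 := hl
        _ ≤ l1 := hlmax m hmFr
  set mstar := mk (i1 + k1 - 1) (j1 + l1 - 1) with hmstardef
  have FIB : ∀ p ∈ s.support, ∀ q ∈ r.support,
      p 0 + q 0 = i1 + k1 → p 1 + q 1 = j1 + l1 → p = ms ∧ q = mr := by
    intro p hp q hq hsum0 hsum1
    have hvp := BS p hp
    have hvq := BR q hq
    have hsum0q : (p 0 : ℚ) + q 0 = (i1:ℚ) + k1 := by exact_mod_cast hsum0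
    have hsum1q : (p 1 : ℚ) + q 1 = (j1:ℚ) + l1 := by exact_mod_cast hsum1
    have e1 : τ * (p 1:ℚ) + τ * (q 1:ℚ) = τ * (j1:ℚ) + τ * (l1:ℚ) := by
      linear_combination τ * hsum1q
    have hrr : τ * ((q 1:ℚ) - 1) = τ * q 1 - τ := by ring
    have hrr2 : τ * ((l1:ℚ) - 1) = τ * l1 - τ := by ring
    have hvpe : (p 0:ℚ) - τ * p 1 = 1 := by linarith
    have hvqe : (q 0:ℚ) - τ * q 1 = -τ := by linarith
    have hpFs : p ∈ Fs := Finset.mem_filter.mpr ⟨hp, hvpe⟩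
    have hqFr : q ∈ Fr := Finset.mem_filter.mpr ⟨hq, hvqe⟩
    have hpj := hjmax p hpFs
    have hql := hlmax q hqFr
    have hpj' : p 1 = j1 := by omega
    have hql' : q 1 = l1 := by omega
    exact ⟨hmsu p hpFs hpj', hmru q hqFr hql'⟩
  have hmstar1 : mstar 1 = j1 + l1 - 1 := by rw [hmstardef, mk_apply1]
  have hmstar0 : mstar 0 = i1 + k1 - 1 := by rw [hmstardef, mk_apply0]
  have hjl : 1 ≤ j1 + l1 - 1 := by omega
  have hm0 : coeff mstar (1 : T) = 0 := by
    rw [MvPolynomial.coeff_one, if_neg]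
    intro h
    have := congrArg (fun m => m 1) h
    rw [← this] at hmstar1
    simp at hmstar1
    omega
  have hcoeff : coeff mstar (pderiv 0 s * pderiv 1 r) = coeff mstar (pderiv 1 s * pderiv 0 r) := by
    have h := congrArg (coeff mstar) hJ1
    rw [MvPolynomial.coeff_sub, hm0] at h
    exact sub_eq_zero.mp h
  have ccne : coeff ms s * coeff mr r ≠ 0 :=
    mul_ne_zero (mem_support_iff.mp hmsS) (mem_support_iff.mp hmrR)
  have key1 : coeff mstar (pderiv 0 s * pderiv 1 r)
      = ((i1 * l1 : ℕ) : K) * (coeff ms s * coeff mr r) := by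
    rw [MvPolynomial.coeff_mul]
    have hmem : ((mk (i1-1) j1, mk k1 (l1-1)) : (Fin 2 →₀ ℕ) × (Fin 2 →₀ ℕ))
        ∈ Finset.HasAntidiagonal.antidiagonal mstar := by
      rw [Finset.HasAntidiagonal.mem_antidiagonal, mk_add_mk, hmstardef]
      congr 1 <;> omega
    rw [Finset.sum_eq_single_of_mem _ hmem]
    · rw [coeff_pderiv, coeff_pderiv, mk_apply0, mk_apply1,
        show mk (i1-1) j1 + Finsupp.single 0 1 = ms by
          rw [single0_eq_mk, mk_add_mk, show i1 - 1 + 1 = i1 from by omega, add_zero, hmsmk],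
        show mk k1 (l1-1) + Finsupp.single 1 1 = mr by
          rw [single1_eq_mk, mk_add_mk, add_zero, show l1 - 1 + 1 = l1 from by omega, hmrmk],
        show i1 - 1 + 1 = i1 from by omega, show l1 - 1 + 1 = l1 from by omega]
      push_cast
      ring
    · intro b hb hbne
      by_contra hbz
      rw [coeff_pderiv, coeff_pderiv] at hbz
      have hb1 : coeff (b.1 + Finsupp.single 0 1) s ≠ 0 := fun h => hbz (by rw [h]; ring)
      have hb2 : coeff (b.2 + Finsupp.single 1 1) r ≠ 0 := fun h => hbz (by rw [h]; ring)
      have hb1mk : b.1 + Finsupp.single (0:Fin 2) 1 = mk (b.1 0 + 1) (b.1 1) := by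
        conv_lhs => rw [← eq_mk' b.1]
        rw [single0_eq_mk, mk_add_mk]
        simp
      have hb2mk : b.2 + Finsupp.single (1:Fin 2) 1 = mk (b.2 0) (b.2 1 + 1) := by
        conv_lhs => rw [← eq_mk' b.2]
        rw [single1_eq_mk, mk_add_mk]
        simp
      rw [hb1mk] at hb1
      rw [hb2mk] at hb2
      have hbsum := Finset.HasAntidiagonal.mem_antidiagonal.mp hb
      have hbs0 : b.1 0 + b.2 0 = i1 + k1 - 1 := by
        have e := congrArg (fun m => m 0) hbsum
        simpa [hmstar0] using e
      have hbs1 : b.1 1 + b.2 1 = j1 + l1 - 1 := by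
        have e := congrArg (fun m => m 1) hbsum
        simpa [hmstar1] using e
      have hp : mk (b.1 0 + 1) (b.1 1) ∈ s.support := mem_support_iff.mpr hb1
      have hq : mk (b.2 0) (b.2 1 + 1) ∈ r.support := mem_support_iff.mpr hb2
      have hc0 : (mk (b.1 0 + 1) (b.1 1)) 0 + (mk (b.2 0) (b.2 1 + 1)) 0 = i1 + k1 := by
        rw [mk_apply0, mk_apply0]
        omega
      have hc1 : (mk (b.1 0 + 1) (b.1 1)) 1 + (mk (b.2 0) (b.2 1 + 1)) 1 = j1 + l1 := by
        rw [mk_apply1, mk_apply1]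
        omega
      obtain ⟨hps, hqs⟩ := FIB _ hp _ hq hc0 hc1
      rw [← hmsmk] at hps
      rw [← hmrmk] at hqs
      obtain ⟨hp0, hp1⟩ := mk_inj hps
      obtain ⟨hq0, hq1⟩ := mk_inj hqs
      apply hbne
      have t0 : b.1 0 = i1 - 1 := by omega
      have t1 : b.1 1 = j1 := by omega
      have u0 : b.2 0 = k1 := by omega
      have u1 : b.2 1 = l1 - 1 := by omega
      have e1 : b.1 = mk (i1-1) j1 := by rw [← eq_mk' b.1, t0, t1]
      have e2 : b.2 = mk k1 (l1-1) := by rw [← eq_mk' b.2, u0, u1]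
      exact Prod.ext e1 e2
  have key2 : coeff mstar (pderiv 1 s * pderiv 0 r)
      = ((j1 * k1 : ℕ) : K) * (coeff ms s * coeff mr r) := by
    rw [MvPolynomial.coeff_mul]
    by_cases hcase : 1 ≤ j1 ∧ 1 ≤ k1
    · obtain ⟨hj1p, hk1p⟩ := hcase
      have hmem : ((mk i1 (j1-1), mk (k1-1) l1) : (Fin 2 →₀ ℕ) × (Fin 2 →₀ ℕ))
          ∈ Finset.HasAntidiagonal.antidiagonal mstar := by
        rw [Finset.HasAntidiagonal.mem_antidiagonal, mk_add_mk, hmstardef]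
        congr 1 <;> omega
      rw [Finset.sum_eq_single_of_mem _ hmem]
      · rw [coeff_pderiv, coeff_pderiv, mk_apply0, mk_apply1,
          show mk i1 (j1-1) + Finsupp.single 1 1 = ms by
            rw [single1_eq_mk, mk_add_mk, add_zero, show j1 - 1 + 1 = j1 from by omega, hmsmk],
          show mk (k1-1) l1 + Finsupp.single 0 1 = mr by
            rw [single0_eq_mk, mk_add_mk, show k1 - 1 + 1 = k1 from by omega, add_zero, hmrmk],
          show j1 - 1 + 1 = j1 from by omega, show k1 - 1 + 1 = k1 from by omega]
        push_cast
        ring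
      · intro b hb hbne
        by_contra hbz
        rw [coeff_pderiv, coeff_pderiv] at hbz
        have hb1 : coeff (b.1 + Finsupp.single 1 1) s ≠ 0 := fun h => hbz (by rw [h]; ring)
        have hb2 : coeff (b.2 + Finsupp.single 0 1) r ≠ 0 := fun h => hbz (by rw [h]; ring)
        have hb1mk : b.1 + Finsupp.single (1:Fin 2) 1 = mk (b.1 0) (b.1 1 + 1) := by
          conv_lhs => rw [← eq_mk' b.1]
          rw [single1_eq_mk, mk_add_mk]
          simp
        have hb2mk : b.2 + Finsupp.single (0:Fin 2) 1 = mk (b.2 0 + 1) (b.2 1) := by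
          conv_lhs => rw [← eq_mk' b.2]
          rw [single0_eq_mk, mk_add_mk]
          simp
        rw [hb1mk] at hb1
        rw [hb2mk] at hb2
        have hbsum := Finset.HasAntidiagonal.mem_antidiagonal.mp hb
        have hbs0 : b.1 0 + b.2 0 = i1 + k1 - 1 := by
          have e := congrArg (fun m => m 0) hbsum
          simpa [hmstar0] using e
        have hbs1 : b.1 1 + b.2 1 = j1 + l1 - 1 := by
          have e := congrArg (fun m => m 1) hbsum
          simpa [hmstar1] using e
        have hp : mk (b.1 0) (b.1 1 + 1) ∈ s.support := mem_support_iff.mpr hb1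
        have hq : mk (b.2 0 + 1) (b.2 1) ∈ r.support := mem_support_iff.mpr hb2
        have hc0 : (mk (b.1 0) (b.1 1 + 1)) 0 + (mk (b.2 0 + 1) (b.2 1)) 0 = i1 + k1 := by
          rw [mk_apply0, mk_apply0]
          omega
        have hc1 : (mk (b.1 0) (b.1 1 + 1)) 1 + (mk (b.2 0 + 1) (b.2 1)) 1 = j1 + l1 := by
          rw [mk_apply1, mk_apply1]
          omega
        obtain ⟨hps, hqs⟩ := FIB _ hp _ hq hc0 hc1
        rw [← hmsmk] at hps
        rw [← hmrmk] at hqs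
        obtain ⟨hp0, hp1⟩ := mk_inj hps
        obtain ⟨hq0, hq1⟩ := mk_inj hqs
        apply hbne
        have t0 : b.1 0 = i1 := by omega
        have t1 : b.1 1 = j1 - 1 := by omega
        have u0 : b.2 0 = k1 - 1 := by omega
        have u1 : b.2 1 = l1 := by omega
        have e1 : b.1 = mk i1 (j1-1) := by rw [← eq_mk' b.1, t0, t1]
        have e2 : b.2 = mk (k1-1) l1 := by rw [← eq_mk' b.2, u0, u1]
        exact Prod.ext e1 e2
    · have hzero : j1 * k1 = 0 := by
        rcases (by omega : j1 = 0 ∨ k1 = 0) with h | h <;> simp [h]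
      rw [Finset.sum_eq_zero, hzero]
      · simp
      · intro b hb
        by_contra hbz
        rw [coeff_pderiv, coeff_pderiv] at hbz
        have hb1 : coeff (b.1 + Finsupp.single 1 1) s ≠ 0 := fun h => hbz (by rw [h]; ring)
        have hb2 : coeff (b.2 + Finsupp.single 0 1) r ≠ 0 := fun h => hbz (by rw [h]; ring)
        have hb1mk : b.1 + Finsupp.single (1:Fin 2) 1 = mk (b.1 0) (b.1 1 + 1) := by
          conv_lhs => rw [← eq_mk' b.1]
          rw [single1_eq_mk, mk_add_mk]
          simp
        have hb2mk : b.2 + Finsupp.single (0:Fin 2) 1 = mk (b.2 0 + 1) (b.2 1) := by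
          conv_lhs => rw [← eq_mk' b.2]
          rw [single0_eq_mk, mk_add_mk]
          simp
        rw [hb1mk] at hb1
        rw [hb2mk] at hb2
        have hbsum := Finset.HasAntidiagonal.mem_antidiagonal.mp hb
        have hbs0 : b.1 0 + b.2 0 = i1 + k1 - 1 := by
          have e := congrArg (fun m => m 0) hbsum
          simpa [hmstar0] using e
        have hbs1 : b.1 1 + b.2 1 = j1 + l1 - 1 := by
          have e := congrArg (fun m => m 1) hbsum
          simpa [hmstar1] using e
        have hp : mk (b.1 0) (b.1 1 + 1) ∈ s.support := mem_support_iff.mpr hb1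
        have hq : mk (b.2 0 + 1) (b.2 1) ∈ r.support := mem_support_iff.mpr hb2
        have hc0 : (mk (b.1 0) (b.1 1 + 1)) 0 + (mk (b.2 0 + 1) (b.2 1)) 0 = i1 + k1 := by
          rw [mk_apply0, mk_apply0]
          omega
        have hc1 : (mk (b.1 0) (b.1 1 + 1)) 1 + (mk (b.2 0 + 1) (b.2 1)) 1 = j1 + l1 := by
          rw [mk_apply1, mk_apply1]
          omega
        obtain ⟨hps, hqs⟩ := FIB _ hp _ hq hc0 hc1
        rw [← hmsmk] at hps
        rw [← hmrmk] at hqs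
        obtain ⟨hp0, hp1⟩ := mk_inj hps
        obtain ⟨hq0, hq1⟩ := mk_inj hqs
        exact hcase ⟨by omega, by omega⟩
  rw [key1, key2] at hcoeff
  have hKeq : ((i1 * l1 : ℕ) : K) = ((j1 * k1 : ℕ) : K) := mul_right_cancel₀ ccne hcoeff
  have hNat : i1 * l1 = j1 * k1 := Nat.cast_inj.mp hKeq
  have hQ : (i1:ℚ) * l1 = (j1:ℚ) * k1 := by exact_mod_cast hNat
  have hfin : (l1:ℚ) + τ * j1 = 0 := by
    linear_combination hQ - (l1:ℚ) * hmsv + (j1:ℚ) * hmrv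
  have hl1q : (1:ℚ) ≤ l1 := by exact_mod_cast hl11
  have hj1q : (0:ℚ) ≤ (j1:ℚ) := by positivity
  nlinarith [mul_nonneg hτ0 hj1q]

lemma cast_succ_ne (n : ℕ) [CharZero K] : ((n + 1 : ℕ) : K) ≠ 0 := by
  exact_mod_cast Nat.succ_ne_zero n

set_option maxHeartbeats 1000000 in
lemma main_structure [CharZero K] (s r : T)
    (hJsr : Jac K s r = 1)
    (hse : ∀ m : Fin 2 →₀ ℕ, Odd (m 1) → coeff m s = 0)
    (hro : ∀ m : Fin 2 →₀ ℕ, Even (m 1) → coeff m r = 0) :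
    ∃ (a b : K) (q : Polynomial K), a * b = 1 ∧
      s = C a * X 0 + Polynomial.aeval (X 1 : T) q ∧ r = C b * X 1 := by
  classical
  have hJ1 : pderiv 0 s * pderiv 1 r - pderiv 1 s * pderiv 0 r = 1 := by
    rw [Jac] at hJsr; exact hJsr
  -- ph0 of s_v vanishes by parity
  have hsv0 : ph0 (pderiv 1 s) = (0 : Polynomial K) := by
    apply Polynomial.ext
    intro i
    rw [coeff_ph0, coeff_pderiv, mk_apply1, single1_eq_mk, mk_add_mk, add_zero,
      hse (mk i (0+1)) (by rw [mk_apply1]; exact odd_one), mul_zero, Polynomial.coeff_zero]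
  have hAB : ph0 (pderiv 0 s) * ph0 (pderiv 1 r) = 1 := by
    have h := congrArg (ph0 (K := K)) hJ1
    rw [map_sub, map_mul, map_mul, map_one, hsv0, zero_mul, sub_zero] at h
    exact h
  obtain ⟨a, hau, hA⟩ := Polynomial.isUnit_iff.mp (IsUnit.of_mul_eq_one _ hAB)
  obtain ⟨b, hbu, hB⟩ := Polynomial.isUnit_iff.mp
    (IsUnit.of_mul_eq_one (a := ph0 (pderiv 1 r)) (ph0 (pderiv 0 s)) (by rw [mul_comm]; exact hAB))
  have hab : a * b = 1 := by
    have h : Polynomial.C (a * b) = Polynomial.C (1 : K) := by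
      rw [map_mul, hA, hB, hAB, map_one]
    exact Polynomial.C_injective h
  have hane : a ≠ 0 := hau.ne_zero
  have hbne : b ≠ 0 := hbu.ne_zero
  -- F-facts
  have hAc : ∀ i : ℕ, (Polynomial.C a).coeff i = ((i + 1 : ℕ) : K) * coeff (mk (i+1) 0) s := by
    intro i
    rw [hA, coeff_ph0, coeff_pderiv, mk_apply0, single0_eq_mk, mk_add_mk, add_zero]
  have hBc : ∀ i : ℕ, (Polynomial.C b).coeff i = coeff (mk i 1) r := by
    intro i
    rw [hB, coeff_ph0, coeff_pderiv, mk_apply1, single1_eq_mk, mk_add_mk, add_zero]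
    norm_num
  have F1a : ∀ i, 2 ≤ i → coeff (mk i 0) s = 0 := by
    intro i h2
    have h := hAc (i - 1)
    rw [Polynomial.coeff_C, if_neg (by omega), show i - 1 + 1 = i from by omega] at h
    rcases mul_eq_zero.mp h.symm with h' | h'
    · exact absurd h' (by exact_mod_cast (by omega : ¬ i = 0))
    · exact h'
  have F1b' : coeff (mk 1 0) s = a := by
    have h := hAc 0
    rw [Polynomial.coeff_C, if_pos rfl] at h
    norm_num at h
    exact h.symm
  have F2a : ∀ k, 1 ≤ k → coeff (mk k 1) r = 0 := by
    intro k hk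
    have h := hBc k
    rw [Polynomial.coeff_C, if_neg (by omega)] at h
    exact h.symm
  have F2b' : coeff (mk 0 1) r = b := by
    have h := hBc 0
    rw [Polynomial.coeff_C, if_pos rfl] at h
    exact h.symm
  obtain ⟨G1, G2⟩ := stage2 s r hJ1 F1a (by rw [F1b']; exact hane)
    F2a (by rw [F2b']; exact hbne) hro
  -- pderiv 0 r = 0
  have pd0r : pderiv 0 r = 0 := by
    apply MvPolynomial.ext
    intro m
    rw [coeff_pderiv, coeff_zero]
    have hz : coeff (m + Finsupp.single (0 : Fin 2) 1) r = 0 := by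
      have hmk : m + Finsupp.single (0:Fin 2) 1 = mk (m 0 + 1) (m 1) := by
        conv_lhs => rw [← eq_mk' m]
        rw [single0_eq_mk, mk_add_mk]
        simp
      rw [hmk]
      by_contra hc
      have := G2 _ (mem_support_iff.mpr hc)
      rw [mk_apply0] at this
      omega
    rw [hz, mul_zero]
  have hJ2 : pderiv 0 s * pderiv 1 r = 1 := by
    rw [pd0r, mul_zero, sub_zero] at hJ1
    exact hJ1
  have hAB1 : ph1 (pderiv 0 s) * ph1 (pderiv 1 r) = 1 := by
    have h := congrArg (ph1 (K := K)) hJ2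
    rw [map_mul, map_one] at h
    exact h
  obtain ⟨a', hau', hA'⟩ := Polynomial.isUnit_iff.mp (IsUnit.of_mul_eq_one _ hAB1)
  obtain ⟨b', hbu', hB'⟩ := Polynomial.isUnit_iff.mp
    (IsUnit.of_mul_eq_one (a := ph1 (pderiv 1 r)) (ph1 (pderiv 0 s)) (by rw [mul_comm]; exact hAB1))
  have hA'c : ∀ j : ℕ, (Polynomial.C a').coeff j = coeff (mk 1 j) s := by
    intro j
    rw [hA', coeff_ph1, coeff_pderiv, mk_apply0, single0_eq_mk, mk_add_mk, zero_add, add_zero]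
    norm_num
  have hB'c : ∀ j : ℕ, (Polynomial.C b').coeff j = ((j + 1 : ℕ) : K) * coeff (mk 0 (j+1)) r := by
    intro j
    rw [hB', coeff_ph1, coeff_pderiv, mk_apply1, single1_eq_mk, mk_add_mk, zero_add]
  have hsG : ∀ j, 1 ≤ j → coeff (mk 1 j) s = 0 := by
    intro j hj
    have h := hA'c j
    rw [Polynomial.coeff_C, if_neg (by omega)] at h
    exact h.symm
  have hrG : ∀ l, 2 ≤ l → coeff (mk 0 l) r = 0 := by
    intro l hl
    have h := hB'c (l - 1)
    rw [Polynomial.coeff_C, if_neg (by omega), show l - 1 + 1 = l from by omega] at h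
    rcases mul_eq_zero.mp h.symm with h' | h'
    · exact absurd h' (by exact_mod_cast (by omega : ¬ l = 0))
    · exact h'
  -- construct q and the structure
  refine ⟨a, b, ph1 s, hab, ?_, ?_⟩
  · apply MvPolynomial.ext
    intro m
    rw [coeff_add, coeff_polyaeval, coeff_ph1]
    have hCX : (C a * X 0 : T) = monomial (mk 1 0) a := by
      rw [monomial_eq_prod, mk_apply0, mk_apply1, pow_one, pow_zero, mul_one]
    rw [hCX, coeff_monomial]
    rcases Nat.lt_or_ge (m 0) 1 with h0 | h0
    · have h00 : m 0 = 0 := by omega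
      rw [if_neg (fun h => by rw [← h, mk_apply0] at h00; omega), if_pos h00, zero_add]
      conv_lhs => rw [← eq_mk' m, h00]
    · rcases Nat.lt_or_ge (m 0) 2 with h1 | h1
      · have h01 : m 0 = 1 := by omega
        rw [if_neg (show ¬ m 0 = 0 by omega), add_zero]
        rcases Nat.eq_zero_or_pos (m 1) with hm1 | hm1
        · have hm10 : m 1 = 0 := by omega
          rw [if_pos ((mk_eq_iff 1 0 m).mpr ⟨h01, hm10⟩)]
          conv_lhs => rw [← eq_mk' m, h01, hm10]
          exact F1b'
        · rw [if_neg (fun h => by rw [← h, mk_apply1] at hm1; omega)]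
          conv_lhs => rw [← eq_mk' m, h01]
          exact hsG (m 1) hm1
      · rw [if_neg (fun h => by rw [← h, mk_apply0] at h1; omega),
          if_neg (show ¬ m 0 = 0 by omega), add_zero]
        by_contra hc
        have := G1 m (mem_support_iff.mpr hc)
        omega
  · apply MvPolynomial.ext
    intro m
    have hCX : (C b * X 1 : T) = monomial (mk 0 1) b := by
      rw [monomial_eq_prod, mk_apply0, mk_apply1, pow_one, pow_zero, mul_one]
    rw [hCX, coeff_monomial]
    rcases Nat.lt_or_ge (m 0) 1 with h0 | h0
    · have h00 : m 0 = 0 := by omega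
      rcases Nat.lt_or_ge (m 1) 1 with hm1 | hm1
      · have h11 : m 1 = 0 := by omega
        rw [if_neg (fun h => by rw [← h, mk_apply1] at h11; omega)]
        exact hro m (by rw [h11]; exact Even.zero)
      · rcases Nat.lt_or_ge (m 1) 2 with hm2 | hm2
        · have h11 : m 1 = 1 := by omega
          rw [if_pos (by rw [mk_eq_iff]; exact ⟨h00, h11⟩)]
          conv_lhs => rw [← eq_mk' m, h00, h11]
          exact F2b'
        · rw [if_neg (fun h => by rw [← h, mk_apply1] at hm2; omega)]
          conv_lhs => rw [← eq_mk' m, h00]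
          exact hrG (m 1) hm2
    · rw [if_neg (fun h => by rw [← h, mk_apply0] at h0; omega)]
      by_contra hc
      have := G2 m (mem_support_iff.mpr hc)
      omega

lemma half_add [CharZero K] : (C (2⁻¹:K) : T) * ((X 0 + X 1) + (X 0 - X 1)) = X 0 := by
  have h2 := hC2 (K := K)
  linear_combination (X 0 : T) * h2

lemma half_sub [CharZero K] : (C (2⁻¹:K) : T) * ((X 0 + X 1) - (X 0 - X 1)) = X 1 := by
  have h2 := hC2 (K := K)
  linear_combination (X 1 : T) * h2

end Stmt16Aux

/-- α-JC₂: every α-endomorphism of `K[X,Y]` with Jacobian 1 is an automorphism. -/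
theorem stmt_16 [CharZero K] (f : MvPolynomial (Fin 2) K →ₐ[K] MvPolynomial (Fin 2) K)
    (hcomm : ∀ p, f (polyAlpha K p) = polyAlpha K (f p))
    (hJ : Jac K (f (X 0)) (f (X 1)) = 1) :
    Function.Bijective f := by
  classical
  set P := f (X 0) with hPdef
  set Q := f (X 1) with hQdef
  have halphaX0 : polyAlpha K (X 0 : MvPolynomial (Fin 2) K) = X 1 := by simp [polyAlpha]
  have hQA : Q = polyAlpha K P := by
    have h := hcomm (X 0)
    rw [halphaX0] at h
    exact h
  have halpha2 : ∀ p : MvPolynomial (Fin 2) K, polyAlpha K (polyAlpha K p) = p := by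
    intro p
    have h : ((polyAlpha K).comp (polyAlpha K)) = AlgHom.id K _ := by
      apply MvPolynomial.algHom_ext
      intro i
      fin_cases i <;> simp [polyAlpha]
    exact congrArg (fun g => g p) (congrArg DFunLike.coe h)
  have hPA : polyAlpha K Q = P := by rw [hQA, halpha2]
  set s := Stmt16Aux.thInv (P + Q) with hsdef
  set r := Stmt16Aux.thInv (P - Q) with hrdef
  have hths : Stmt16Aux.th s = P + Q := Stmt16Aux.th_thInv _
  have hthr : Stmt16Aux.th r = P - Q := Stmt16Aux.th_thInv _
  have hJac2 : Jac K (P + Q) (P - Q) = -2 := by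
    have h : Jac K (P + Q) (P - Q) = -2 * Jac K P Q := by
      simp only [Jac, map_add, map_sub]
      ring
    rw [h, hJ, mul_one]
  have hJuv : Jac K (X 0 + X 1 : MvPolynomial (Fin 2) K) (X 0 - X 1) = -2 := by
    simp only [Jac, map_add, map_sub, pderiv_X, Pi.single_apply]
    norm_num
  have hchain := Stmt16Aux.jac_aeval (K := K) ![X 0 + X 1, X 0 - X 1] s r
  rw [show (aeval ![X 0 + X 1, X 0 - X 1] : MvPolynomial (Fin 2) K →ₐ[K] MvPolynomial (Fin 2) K)
    = Stmt16Aux.th from rfl] at hchain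
  rw [hths, hthr, hJac2,
    show (![X 0 + X 1, X 0 - X 1] : Fin 2 → MvPolynomial (Fin 2) K) 0 = X 0 + X 1 from rfl,
    show (![X 0 + X 1, X 0 - X 1] : Fin 2 → MvPolynomial (Fin 2) K) 1 = X 0 - X 1 from rfl,
    hJuv] at hchain
  have h2ne : (-2 : MvPolynomial (Fin 2) K) ≠ 0 := by norm_num
  have hJsr : Jac K s r = 1 := by
    have h1 : Stmt16Aux.th (Jac K s r) = Stmt16Aux.th 1 := by
      rw [map_one]
      apply mul_right_cancel₀ h2ne
      rw [one_mul]
      exact hchain.symm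
    have h2 := congrArg Stmt16Aux.thInv h1
    rw [Stmt16Aux.thInv_th, Stmt16Aux.thInv_th] at h2
    exact h2
  have hthnu : ∀ p : MvPolynomial (Fin 2) K,
      Stmt16Aux.th (aeval ![X 0, -X 1] p) = polyAlpha K (Stmt16Aux.th p) := by
    intro p
    have h : (Stmt16Aux.th.comp (aeval ![X 0, -X 1]) : MvPolynomial (Fin 2) K →ₐ[K] _)
        = (polyAlpha K).comp Stmt16Aux.th := by
      apply MvPolynomial.algHom_ext
      intro i
      fin_cases i <;> simp [Stmt16Aux.th, polyAlpha] <;> ring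
    exact congrArg (fun g => g p) (congrArg DFunLike.coe h)
  have hnus : aeval ![X 0, -X 1] s = s := by
    have h := hthnu s
    rw [hths, map_add, ← hQA, hPA, add_comm Q P, ← hths] at h
    have h2 := congrArg Stmt16Aux.thInv h
    rw [Stmt16Aux.thInv_th, Stmt16Aux.thInv_th] at h2
    exact h2
  have hnur : aeval ![X 0, -X 1] r = -r := by
    have h := hthnu r
    rw [hthr, map_sub, ← hQA, hPA, show Q - P = -(P - Q) from by ring, ← hthr, ← map_neg] at h
    have h2 := congrArg Stmt16Aux.thInv h
    rw [Stmt16Aux.thInv_th, Stmt16Aux.thInv_th] at h2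
    exact h2
  have hse : ∀ m : Fin 2 →₀ ℕ, Odd (m 1) → coeff m s = 0 := by
    intro m hodd
    have h := Stmt16Aux.coeff_nu s m
    rw [hnus, Odd.neg_one_pow hodd] at h
    have h2 : (2:K) * coeff m s = 0 := by linear_combination h
    rcases mul_eq_zero.mp h2 with h' | h'
    · exact absurd h' two_ne_zero
    · exact h'
  have hro : ∀ m : Fin 2 →₀ ℕ, Even (m 1) → coeff m r = 0 := by
    intro m heven
    have h := Stmt16Aux.coeff_nu r m
    rw [hnur, Even.neg_one_pow heven, one_mul, MvPolynomial.coeff_neg] at h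
    have h2 : (2:K) * coeff m r = 0 := by linear_combination -h
    rcases mul_eq_zero.mp h2 with h' | h'
    · exact absurd h' two_ne_zero
    · exact h'
  obtain ⟨a, b, q, hab, hsst, hrst⟩ := Stmt16Aux.main_structure s r hJsr hse hro
  have hthX0 : Stmt16Aux.th (X 0 : MvPolynomial (Fin 2) K) = X 0 + X 1 := by
    simp [Stmt16Aux.th]
  have hthX1 : Stmt16Aux.th (X 1 : MvPolynomial (Fin 2) K) = X 0 - X 1 := by
    simp [Stmt16Aux.th]
  have hthC : ∀ c : K, Stmt16Aux.th (C c) = C c := fun c => by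
    simp [Stmt16Aux.th, MvPolynomial.algebraMap_eq]
  have hPQadd : P + Q
      = C a * (X 0 + X 1) + Polynomial.aeval (X 0 - X 1 : MvPolynomial (Fin 2) K) q := by
    rw [← hths, hsst, map_add, map_mul, hthC, hthX0, ← Polynomial.aeval_algHom_apply, hthX1]
  have hPQsub : P - Q = C b * (X 0 - X 1) := by
    rw [← hthr, hrst, map_mul, hthC, hthX1]
  set Wv : MvPolynomial (Fin 2) K := C a * (X 0 - X 1) with hWvdef
  set St : MvPolynomial (Fin 2) K := Polynomial.aeval Wv q with hStdef
  set Wu : MvPolynomial (Fin 2) K := C b * ((X 0 + X 1) - St) with hWudef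
  set W0 : MvPolynomial (Fin 2) K := C (2⁻¹:K) * (Wu + Wv) with hW0def
  set W1 : MvPolynomial (Fin 2) K := C (2⁻¹:K) * (Wu - Wv) with hW1def
  set g : MvPolynomial (Fin 2) K →ₐ[K] MvPolynomial (Fin 2) K := aeval ![W0, W1] with hgdef
  have hfC : ∀ c : K, f (C c) = C c := fun c => by
    rw [show (C c : MvPolynomial (Fin 2) K) = algebraMap K _ c from rfl, f.commutes]
  have hgC : ∀ c : K, g (C c) = C c := fun c => by
    rw [show (C c : MvPolynomial (Fin 2) K) = algebraMap K _ c from rfl, g.commutes]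
  have hCab : (C a : MvPolynomial (Fin 2) K) * C b = 1 := by
    rw [← map_mul, hab, map_one]
  have hCba : (C b : MvPolynomial (Fin 2) K) * C a = 1 := by
    rw [← map_mul, mul_comm b a, hab, map_one]
  have h2K := Stmt16Aux.hC2 (K := K)
  have hfWv : f Wv = X 0 - X 1 := by
    rw [hWvdef, map_mul, hfC, map_sub, ← hPdef, ← hQdef, hPQsub, ← mul_assoc, hCab, one_mul]
  have hfSt : f St = Polynomial.aeval (X 0 - X 1 : MvPolynomial (Fin 2) K) q := by
    rw [hStdef, ← Polynomial.aeval_algHom_apply, hfWv]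
  have hfWu : f Wu = X 0 + X 1 := by
    rw [hWudef, map_mul, hfC, map_sub, map_add, ← hPdef, ← hQdef, hfSt, hPQadd]
    linear_combination (X 0 + X 1 : MvPolynomial (Fin 2) K) * hCba
  have hgu : g (X 0 + X 1) = Wu := by
    rw [map_add, hgdef,
      show (aeval ![W0, W1]) (X 0 : MvPolynomial (Fin 2) K) = W0 from by simp,
      show (aeval ![W0, W1]) (X 1 : MvPolynomial (Fin 2) K) = W1 from by simp,
      hW0def, hW1def]
    linear_combination Wu * h2K
  have hgv : g (X 0 - X 1) = Wv := by
    rw [map_sub, hgdef,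
      show (aeval ![W0, W1]) (X 0 : MvPolynomial (Fin 2) K) = W0 from by simp,
      show (aeval ![W0, W1]) (X 1 : MvPolynomial (Fin 2) K) = W1 from by simp,
      hW0def, hW1def]
    linear_combination Wv * h2K
  have hfW0 : f W0 = X 0 := by
    rw [hW0def, map_mul, hfC, map_add, hfWu, hfWv]
    exact Stmt16Aux.half_add
  have hfW1 : f W1 = X 1 := by
    rw [hW1def, map_mul, hfC, map_sub, hfWu, hfWv]
    exact Stmt16Aux.half_sub
  have hgP : g P = X 0 := by
    have hP2 : P = C (2⁻¹:K) * ((P + Q) + (P - Q)) := by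
      linear_combination (-P) * h2K
    rw [hP2, hPQadd, hPQsub, map_mul, hgC, map_add, map_add, map_mul, map_mul, hgC, hgC,
      hgu, hgv, ← Polynomial.aeval_algHom_apply, hgv, ← hStdef, hWudef, hWvdef]
    linear_combination (C (2⁻¹:K) * ((X 0 + X 1) - St) : MvPolynomial (Fin 2) K) * hCab
      + (C (2⁻¹:K) * (X 0 - X 1) : MvPolynomial (Fin 2) K) * hCba + Stmt16Aux.half_add (K := K)
  have hgQ : g Q = X 1 := by
    have hQ2 : Q = C (2⁻¹:K) * ((P + Q) - (P - Q)) := by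
      linear_combination (-Q) * h2K
    rw [hQ2, hPQadd, hPQsub, map_mul, hgC, map_sub, map_add, map_mul, map_mul, hgC, hgC,
      hgu, hgv, ← Polynomial.aeval_algHom_apply, hgv, ← hStdef, hWudef, hWvdef]
    linear_combination (C (2⁻¹:K) * ((X 0 + X 1) - St) : MvPolynomial (Fin 2) K) * hCab
      - (C (2⁻¹:K) * (X 0 - X 1) : MvPolynomial (Fin 2) K) * hCba + Stmt16Aux.half_sub (K := K)
  have hfg : f.comp g = AlgHom.id K (MvPolynomial (Fin 2) K) := by
    apply MvPolynomial.algHom_ext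
    intro i
    fin_cases i
    · show f (g (X 0)) = X 0
      rw [show g (X (0 : Fin 2)) = W0 from by rw [hgdef]; simp]
      exact hfW0
    · show f (g (X 1)) = X 1
      rw [show g (X (1 : Fin 2)) = W1 from by rw [hgdef]; simp]
      exact hfW1
  have hgf : g.comp f = AlgHom.id K (MvPolynomial (Fin 2) K) := by
    apply MvPolynomial.algHom_ext
    intro i
    fin_cases i
    · show g (f (X 0)) = X 0
      rw [← hPdef]
      exact hgP
    · show g (f (X 1)) = X 1
      rw [← hQdef]
      exact hgQ
  refine Function.bijective_iff_has_inverse.mpr ⟨g, ?_, ?_⟩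
  · intro x
    have := congrArg (fun h => h x) (congrArg DFunLike.coe hgf)
    simpa using this
  · intro x
    have := congrArg (fun h => h x) (congrArg DFunLike.coe hfg)
    simpa using this
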